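/- Let L : M_n(ℂ) → M_n(ℂ) be a Liouvillian. Then the eigenvalue 0 of L has no Jordan block (its algebraic multiplicity equals its geometric multiplicity): ker(L ∘ L) = ker(L), and more generally ker(L^k) = ker(L) for every integer k ≥ 1. -/

import Mathlib

open Matrix Complex

set_option linter.unusedSectionVars false

namespace LiouvAux

variable {n : ℕ} {F : Type} [Fintype F]


noncomputable def K (H : Matrix (Fin n) (Fin n) ℂ) (Γ : F → Matrix (Fin n) (Fin n) ℂ) :
    Module.End ℂ (Matrix (Fin n) (Fin n) ℂ) :=
  Complex.I • (LinearMap.mulLeft ℂ H - LinearMap.mulRight ℂ H) +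
    ∑ μ : F, ((LinearMap.mulRight ℂ (Γ μ)).comp (LinearMap.mulLeft ℂ (Γ μ)ᴴ) -
      (2⁻¹ : ℂ) • (LinearMap.mulLeft ℂ ((Γ μ)ᴴ * Γ μ) + LinearMap.mulRight ℂ ((Γ μ)ᴴ * Γ μ)))

lemma K_apply (H : Matrix (Fin n) (Fin n) ℂ) (Γ : F → Matrix (Fin n) (Fin n) ℂ)
    (X : Matrix (Fin n) (Fin n) ℂ) :
    K H Γ X = Complex.I • (H * X - X * H) +
      ∑ μ : F, ((Γ μ)ᴴ * X * Γ μ -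
        (2⁻¹ : ℂ) • ((Γ μ)ᴴ * Γ μ * X + X * ((Γ μ)ᴴ * Γ μ))) := by
  simp [K, LinearMap.sum_apply, LinearMap.mulLeft_apply, LinearMap.mulRight_apply, mul_assoc]

lemma star_vecMul_eigen (Z : Matrix (Fin n) (Fin n) ℂ) (hZ : Z.IsHermitian)
    (lam : ℝ) (v : Fin n → ℂ) (hv : Z *ᵥ v = ((lam : ℝ) : ℂ) • v) :
    star v ᵥ* Z = ((lam : ℝ) : ℂ) • star v := by
  have : star v ᵥ* Zᴴ = star (Z *ᵥ v) := (star_mulVec Z v).symm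
  rw [hZ.eq] at this
  rw [this, hv, star_smul]
  simp [Complex.star_def, Complex.conj_ofReal]

lemma sum_mulVec (f : F → Matrix (Fin n) (Fin n) ℂ) (v : Fin n → ℂ) :
    (∑ μ : F, f μ) *ᵥ v = ∑ μ : F, f μ *ᵥ v := by
  ext i
  simp only [Matrix.mulVec, dotProduct, Matrix.sum_apply, Finset.sum_mul, Finset.sum_apply]
  exact Finset.sum_comm

lemma dotProduct_sum (w : Fin n → ℂ) (f : F → (Fin n → ℂ)) :
    w ⬝ᵥ (∑ μ : F, f μ) = ∑ μ : F, w ⬝ᵥ f μ := by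
  simp only [dotProduct, Finset.sum_apply, Finset.mul_sum]
  exact Finset.sum_comm

lemma dissip (H : Matrix (Fin n) (Fin n) ℂ) (Γ : F → Matrix (Fin n) (Fin n) ℂ)
    (Z : Matrix (Fin n) (Fin n) ℂ) (hZ : Z.IsHermitian) (lam : ℝ) (v : Fin n → ℂ)
    (hv : Z *ᵥ v = ((lam : ℝ) : ℂ) • v)
    (hray : ∀ u : Fin n → ℂ, (star u ⬝ᵥ (Z *ᵥ u)).re ≤ lam * (star u ⬝ᵥ u).re) :
    (star v ⬝ᵥ ((K H Γ Z) *ᵥ v)).re ≤ 0 := by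
  have hvec := star_vecMul_eigen Z hZ lam v hv
  have hdotZ : ∀ x : Fin n → ℂ, star v ⬝ᵥ (Z *ᵥ x) = ((lam : ℝ) : ℂ) * (star v ⬝ᵥ x) := by
    intro x
    rw [dotProduct_mulVec, hvec, smul_dotProduct, smul_eq_mul]
  have hH0 : star v ⬝ᵥ ((Complex.I • (H * Z - Z * H)) *ᵥ v) = 0 := by
    rw [smul_mulVec, dotProduct_smul, sub_mulVec, dotProduct_sub,
      ← mulVec_mulVec, ← mulVec_mulVec, hv, mulVec_smul, dotProduct_smul, hdotZ (H *ᵥ v)]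
    simp [smul_eq_mul]
  have key : ∀ μ : F, (star v ⬝ᵥ (((Γ μ)ᴴ * Z * Γ μ
      - (2⁻¹ : ℂ) • ((Γ μ)ᴴ * Γ μ * Z + Z * ((Γ μ)ᴴ * Γ μ))) *ᵥ v)).re ≤ 0 := by
    intro μ
    set u : Fin n → ℂ := Γ μ *ᵥ v with hu
    have hstar : star v ᵥ* (Γ μ)ᴴ = star u := by rw [hu, star_mulVec]
    have c1 : star v ⬝ᵥ (((Γ μ)ᴴ * Z * Γ μ) *ᵥ v) = star u ⬝ᵥ (Z *ᵥ u) := by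
      rw [← mulVec_mulVec, ← mulVec_mulVec, dotProduct_mulVec, hstar]
    have hgv : star v ⬝ᵥ (((Γ μ)ᴴ * Γ μ) *ᵥ v) = star u ⬝ᵥ u := by
      rw [← mulVec_mulVec, dotProduct_mulVec, hstar]
    have c2 : star v ⬝ᵥ (((Γ μ)ᴴ * Γ μ * Z) *ᵥ v) = ((lam : ℝ) : ℂ) * (star u ⬝ᵥ u) := by
      rw [← mulVec_mulVec, hv, mulVec_smul, dotProduct_smul, hgv, smul_eq_mul]
    have c3 : star v ⬝ᵥ ((Z * ((Γ μ)ᴴ * Γ μ)) *ᵥ v) = ((lam : ℝ) : ℂ) * (star u ⬝ᵥ u) := by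
      rw [← mulVec_mulVec, hdotZ, hgv]
    rw [sub_mulVec, dotProduct_sub, smul_mulVec, dotProduct_smul, add_mulVec,
      dotProduct_add, c1, c2, c3, smul_eq_mul]
    have e : star u ⬝ᵥ (Z *ᵥ u) - (2⁻¹ : ℂ) * (((lam : ℝ) : ℂ) * (star u ⬝ᵥ u)
        + ((lam : ℝ) : ℂ) * (star u ⬝ᵥ u))
        = star u ⬝ᵥ (Z *ᵥ u) - ((lam : ℝ) : ℂ) * (star u ⬝ᵥ u) := by ring
    rw [e, Complex.sub_re, Complex.re_ofReal_mul, sub_nonpos]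
    exact hray u
  rw [K_apply, add_mulVec, dotProduct_add, sum_mulVec, dotProduct_sum]
  rw [Complex.add_re, hH0, Complex.zero_re, zero_add, Complex.re_sum]
  exact Finset.sum_nonpos fun μ _ => key μ



lemma trace_adjoint (H : Matrix (Fin n) (Fin n) ℂ) (Γ : F → Matrix (Fin n) (Fin n) ℂ)
    (X ρ : Matrix (Fin n) (Fin n) ℂ) :
    ((X * ((-Complex.I) • (H * ρ - ρ * H) +
        ∑ μ : F, (Γ μ * ρ * (Γ μ)ᴴ -
          (2⁻¹ : ℂ) • ((Γ μ)ᴴ * Γ μ * ρ + ρ * ((Γ μ)ᴴ * Γ μ))))).trace : ℂ) =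
    (((Complex.I • (H * X - X * H) +
      ∑ μ : F, ((Γ μ)ᴴ * X * Γ μ -
        (2⁻¹ : ℂ) • ((Γ μ)ᴴ * Γ μ * X + X * ((Γ μ)ᴴ * Γ μ)))) * ρ).trace : ℂ) := by
  have key : ∀ A B : Matrix (Fin n) (Fin n) ℂ, (A * B).trace = (B * A).trace :=
    fun A B => trace_mul_comm A B
  simp only [Matrix.mul_add, Matrix.add_mul, Matrix.mul_sub, Matrix.sub_mul,
    Matrix.mul_smul, Matrix.smul_mul, Finset.mul_sum, Finset.sum_mul,
    trace_add, trace_sub, trace_smul, trace_sum, smul_eq_mul]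
  have e1 : (X * (H * ρ)).trace = (X * H * ρ).trace := by rw [← mul_assoc]
  have e2 : (X * (ρ * H)).trace = (H * X * ρ).trace := by
    rw [show X * (ρ * H) = (X * ρ) * H by noncomm_ring, key,
      show H * (X * ρ) = H * X * ρ by noncomm_ring]
  have e3 : ∀ μ : F, (X * (Γ μ * ρ * (Γ μ)ᴴ)).trace - 2⁻¹ * ((X * ((Γ μ)ᴴ * Γ μ * ρ)).trace
      + (X * (ρ * ((Γ μ)ᴴ * Γ μ))).trace)
      = ((Γ μ)ᴴ * X * Γ μ * ρ).trace - 2⁻¹ * (((Γ μ)ᴴ * Γ μ * X * ρ).trace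
      + (X * ((Γ μ)ᴴ * Γ μ) * ρ).trace) := by
    intro μ
    have a1 : (X * (Γ μ * ρ * (Γ μ)ᴴ)).trace = ((Γ μ)ᴴ * X * Γ μ * ρ).trace := by
      rw [show X * (Γ μ * ρ * (Γ μ)ᴴ) = (X * Γ μ * ρ) * (Γ μ)ᴴ by noncomm_ring, key,
        show (Γ μ)ᴴ * (X * Γ μ * ρ) = (Γ μ)ᴴ * X * Γ μ * ρ by noncomm_ring]
    have a2 : (X * (ρ * ((Γ μ)ᴴ * Γ μ))).trace = ((Γ μ)ᴴ * Γ μ * X * ρ).trace := by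
      rw [show X * (ρ * ((Γ μ)ᴴ * Γ μ)) = (X * ρ) * ((Γ μ)ᴴ * Γ μ) by noncomm_ring, key,
        show ((Γ μ)ᴴ * Γ μ) * (X * ρ) = (Γ μ)ᴴ * Γ μ * X * ρ by noncomm_ring]
    have a3 : (X * ((Γ μ)ᴴ * Γ μ * ρ)).trace = (X * ((Γ μ)ᴴ * Γ μ) * ρ).trace := by
      rw [show X * ((Γ μ)ᴴ * Γ μ * ρ) = X * ((Γ μ)ᴴ * Γ μ) * ρ by noncomm_ring]
    rw [a1, a2, a3]; ring
  rw [Finset.sum_congr rfl (fun μ _ => e3 μ), e1, e2]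
  ring


lemma re_star_dot (u : Fin n → ℂ) :
    (star u ⬝ᵥ u).re = ∑ i, Complex.normSq (u i) := by
  simp only [dotProduct, Pi.star_apply, Complex.re_sum]
  refine Finset.sum_congr rfl fun i _ => ?_
  have : (star (u i)) * u i = (Complex.normSq (u i) : ℂ) := by
    rw [Complex.normSq_eq_conj_mul_self]; rfl
  rw [this, Complex.ofReal_re]

lemma re_star_dot_nonneg (u : Fin n → ℂ) : 0 ≤ (star u ⬝ᵥ u).re := by
  rw [re_star_dot]
  exact Finset.sum_nonneg fun i _ => Complex.normSq_nonneg _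

lemma rayleigh (Z : Matrix (Fin n) (Fin n) ℂ) (hZ : Z.IsHermitian) (lam : ℝ)
    (hlam : ∀ i, hZ.eigenvalues i ≤ lam) (u : Fin n → ℂ) :
    (star u ⬝ᵥ (Z *ᵥ u)).re ≤ lam * (star u ⬝ᵥ u).re := by
  set U : Matrix (Fin n) (Fin n) ℂ := (hZ.eigenvectorUnitary : Matrix (Fin n) (Fin n) ℂ) with hU
  set y : Fin n → ℂ := (star U) *ᵥ u with hy
  have hstary : star u ᵥ* U = star y := by
    rw [hy, star_mulVec, star_eq_conjTranspose, conjTranspose_conjTranspose]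
  have hUU : U * star U = 1 := mem_unitaryGroup_iff.mp hZ.eigenvectorUnitary.2
  have h1 : star u ⬝ᵥ (Z *ᵥ u)
      = star y ⬝ᵥ ((diagonal (RCLike.ofReal ∘ hZ.eigenvalues)) *ᵥ y) := by
    conv_lhs => rw [hZ.spectral_theorem]
    rw [Unitary.conjStarAlgAut_apply, ← hU, ← mulVec_mulVec, ← mulVec_mulVec, dotProduct_mulVec, hstary]
  have h2 : star y ⬝ᵥ y = star u ⬝ᵥ u := by
    rw [hy, ← hstary]
    rw [← dotProduct_mulVec, mulVec_mulVec, hUU, one_mulVec]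
  have h3 : (star y ⬝ᵥ ((diagonal (RCLike.ofReal ∘ hZ.eigenvalues)) *ᵥ y)).re
      = ∑ i, hZ.eigenvalues i * Complex.normSq (y i) := by
    simp only [dotProduct, Pi.star_apply, Complex.re_sum, mulVec_diagonal]
    refine Finset.sum_congr rfl fun i _ => ?_
    have : star (y i) * ((RCLike.ofReal ∘ hZ.eigenvalues) i * y i)
        = ((hZ.eigenvalues i : ℝ) : ℂ) * (Complex.normSq (y i) : ℂ) := by
      rw [Complex.normSq_eq_conj_mul_self]
      simp only [Function.comp_apply, RCLike.ofReal_alg, Complex.real_smul, Complex.ofReal_one,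
        mul_one, Pi.star_apply]
      ring_nf
      rw [Complex.star_def]
      ring
    rw [this]
    simp
  rw [h1, h3, ← h2, re_star_dot]
  rw [Finset.mul_sum]
  exact Finset.sum_le_sum fun i _ =>
    mul_le_mul_of_nonneg_right (hlam i) (Complex.normSq_nonneg _)



lemma eigen_mulVec (Z : Matrix (Fin n) (Fin n) ℂ) (hZ : Z.IsHermitian) (i : Fin n) :
    Z *ᵥ ⇑(hZ.eigenvectorBasis i) = ((hZ.eigenvalues i : ℝ) : ℂ) • ⇑(hZ.eigenvectorBasis i) := by
  rw [hZ.mulVec_eigenvectorBasis]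
  ext j
  simp [Complex.real_smul]

lemma eigen_unit (Z : Matrix (Fin n) (Fin n) ℂ) (hZ : Z.IsHermitian) (i : Fin n) :
    (star ⇑(hZ.eigenvectorBasis i) ⬝ᵥ ⇑(hZ.eigenvectorBasis i)) = 1 := by
  have h := hZ.eigenvectorBasis.orthonormal.1 i
  have h2 : (inner ℂ (hZ.eigenvectorBasis i) (hZ.eigenvectorBasis i) : ℂ)
      = ((‖hZ.eigenvectorBasis i‖ : ℂ)) ^ 2 := inner_self_eq_norm_sq_to_K _
  rw [h, EuclideanSpace.inner_eq_star_dotProduct] at h2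
  simpa [dotProduct_comm] using h2

lemma smul_herm (Y : Matrix (Fin n) (Fin n) ℂ) (hY : Y.IsHermitian) (t : ℝ) :
    (((t : ℝ) : ℂ) • Y).IsHermitian := by
  rw [Matrix.IsHermitian, conjTranspose_smul, hY.eq]
  congr 1
  simp [Complex.star_def, Complex.conj_ofReal]

lemma pos_case (H : Matrix (Fin n) (Fin n) ℂ) (Γ : F → Matrix (Fin n) (Fin n) ℂ)
    (A Y : Matrix (Fin n) (Fin n) ℂ) (hA : A.IsHermitian) (hY : Y.IsHermitian)
    (hKA : K H Γ A = Y) (hKY : K H Γ Y = 0) (w : Fin n → ℂ)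
    (hw : 0 < (star w ⬝ᵥ (Y *ᵥ w)).re) : False := by
  rcases isEmpty_or_nonempty (Fin n) with hE | hNE
  · simp [dotProduct, Finset.univ_eq_empty] at hw
  set μ : ℝ := (star w ⬝ᵥ (Y *ᵥ w)).re with hμdef
  obtain ⟨i0, _, hi0⟩ := Finset.exists_max_image Finset.univ hA.eigenvalues
    ⟨Classical.arbitrary _, Finset.mem_univ _⟩
  set lamA : ℝ := hA.eigenvalues i0 with hlamAdef
  have hlamA : ∀ i, hA.eigenvalues i ≤ lamA := fun i => hi0 i (Finset.mem_univ i)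
  set c : ℝ := (star w ⬝ᵥ w).re with hcdef
  have hc : 0 ≤ c := re_star_dot_nonneg w
  set C0 : ℝ := lamA * c - (star w ⬝ᵥ (A *ᵥ w)).re with hC0def
  set t : ℝ := (|C0| + 1) / μ with htdef
  have ht : 0 < t := div_pos (by positivity) hw
  set Z : Matrix (Fin n) (Fin n) ℂ := A + ((t : ℝ) : ℂ) • Y with hZdef
  have hZh : Z.IsHermitian := hA.add (smul_herm Y hY t)
  have hKZ : K H Γ Z = Y := by
    rw [hZdef, map_add, _root_.map_smul, hKA, hKY, smul_zero, add_zero]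
  obtain ⟨j0, _, hj0⟩ := Finset.exists_max_image Finset.univ hZh.eigenvalues
    ⟨Classical.arbitrary _, Finset.mem_univ _⟩
  set lam : ℝ := hZh.eigenvalues j0 with hlamdef
  have hlam : ∀ i, hZh.eigenvalues i ≤ lam := fun i => hj0 i (Finset.mem_univ i)
  set v : Fin n → ℂ := ⇑(hZh.eigenvectorBasis j0) with hvdef
  have hv : Z *ᵥ v = ((lam : ℝ) : ℂ) • v := eigen_mulVec Z hZh j0
  have hrayZ := rayleigh Z hZh lam hlam
  have hdis : (star v ⬝ᵥ (Y *ᵥ v)).re ≤ 0 := by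
    have := dissip H Γ Z hZh lam v hv hrayZ
    rwa [hKZ] at this
  have hunit : (star v ⬝ᵥ v).re = 1 := by rw [eigen_unit Z hZh j0]; simp
  -- split re of quadratic form of Z
  have hsplit : ∀ x : Fin n → ℂ, (star x ⬝ᵥ (Z *ᵥ x)).re
      = (star x ⬝ᵥ (A *ᵥ x)).re + t * (star x ⬝ᵥ (Y *ᵥ x)).re := by
    intro x
    rw [hZdef, add_mulVec, smul_mulVec, dotProduct_add, dotProduct_smul,
      smul_eq_mul, Complex.add_re, Complex.re_ofReal_mul]
  -- lam = re (v Z v)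
  have hlameq : lam = (star v ⬝ᵥ (Z *ᵥ v)).re := by
    have := hZh.eigenvalues_eq j0
    simpa [hlamdef, hvdef, RCLike.re_to_complex] using this
  have h1 : lam ≤ lamA := by
    have hAv : (star v ⬝ᵥ (A *ᵥ v)).re ≤ lamA * (star v ⬝ᵥ v).re := rayleigh A hA lamA hlamA v
    rw [hunit, mul_one] at hAv
    have := hsplit v
    nlinarith [mul_nonpos_of_nonneg_of_nonpos (le_of_lt ht) hdis]
  have h2 : (star w ⬝ᵥ (Z *ᵥ w)).re ≤ lam * c := hrayZ w
  have h3 : (star w ⬝ᵥ (A *ᵥ w)).re + t * μ ≤ lamA * c := by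
    have := hsplit w
    nlinarith [mul_le_mul_of_nonneg_right h1 hc]
  have htμ : t * μ = |C0| + 1 := by
    rw [htdef, div_mul_cancel₀ _ (ne_of_gt hw)]
  have := le_abs_self C0
  rw [htμ] at h3
  rw [hC0def] at this
  linarith



lemma K_conjTranspose (H : Matrix (Fin n) (Fin n) ℂ) (hH : H.IsHermitian)
    (Γ : F → Matrix (Fin n) (Fin n) ℂ) (X : Matrix (Fin n) (Fin n) ℂ) :
    K H Γ Xᴴ = (K H Γ X)ᴴ := by
  rw [K_apply, K_apply, conjTranspose_add, conjTranspose_smul, Matrix.conjTranspose_sum]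
  congr 1
  · rw [conjTranspose_sub, conjTranspose_mul, conjTranspose_mul, hH.eq]
    simp only [Complex.star_def, Complex.conj_I, neg_smul, smul_sub]
    ext i j
    simp
    ring
  · refine Finset.sum_congr rfl fun μ _ => ?_
    rw [conjTranspose_sub, conjTranspose_mul, conjTranspose_mul, conjTranspose_smul,
      conjTranspose_add, conjTranspose_mul, conjTranspose_mul, conjTranspose_mul,
      conjTranspose_conjTranspose]
    congr 1
    · rw [mul_assoc]
    · congr 1
      · simp [Complex.star_def]
      · rw [add_comm]
        congr 1
        · simp [conjTranspose_mul, mul_assoc]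

lemma herm_case (H : Matrix (Fin n) (Fin n) ℂ) (Γ : F → Matrix (Fin n) (Fin n) ℂ)
    (A Y : Matrix (Fin n) (Fin n) ℂ) (hA : A.IsHermitian) (hY : Y.IsHermitian)
    (hKA : K H Γ A = Y) (hKY : K H Γ Y = 0) : Y = 0 := by
  by_contra hne
  have hNE : Nonempty (Fin n) := by
    by_contra h
    have : IsEmpty (Fin n) := not_nonempty_iff.mp h
    exact hne (by ext i j; exact (this.false i).elim)
  have hex : ∃ i, hY.eigenvalues i ≠ 0 := by
    by_contra h
    push_neg at h
    apply hne
    have hd : diagonal (RCLike.ofReal ∘ hY.eigenvalues) = (0 : Matrix (Fin n) (Fin n) ℂ) := by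
      ext i j
      by_cases hij : i = j <;> simp [diagonal, hij, h]
    calc Y = _ * _ * _ := hY.spectral_theorem
    _ = 0 := by rw [hd]; simp
  obtain ⟨i, hi⟩ := hex
  set w : Fin n → ℂ := ⇑(hY.eigenvectorBasis i) with hwdef
  have hwval : hY.eigenvalues i = (star w ⬝ᵥ (Y *ᵥ w)).re := by
    simpa [RCLike.re_to_complex] using hY.eigenvalues_eq i
  rcases lt_or_gt_of_ne hi with hneg | hpos
  · refine pos_case H Γ (-A) (-Y) hA.neg hY.neg (by rw [map_neg, hKA])
      (by rw [map_neg, hKY, neg_zero]) w ?_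
    rw [neg_mulVec, dotProduct_neg, Complex.neg_re]
    rw [hwval] at hneg
    linarith
  · exact pos_case H Γ A Y hA hY hKA hKY w (by rw [← hwval]; exact hpos)

lemma ker_range_K (H : Matrix (Fin n) (Fin n) ℂ) (hH : H.IsHermitian)
    (Γ : F → Matrix (Fin n) (Fin n) ℂ) (Y : Matrix (Fin n) (Fin n) ℂ)
    (hKY : K H Γ Y = 0) (X : Matrix (Fin n) (Fin n) ℂ) (hX : K H Γ X = Y) : Y = 0 := by
  set A1 : Matrix (Fin n) (Fin n) ℂ := (2⁻¹ : ℂ) • (X + Xᴴ) with hA1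
  set Y1 : Matrix (Fin n) (Fin n) ℂ := (2⁻¹ : ℂ) • (Y + Yᴴ) with hY1
  have hKXT : K H Γ Xᴴ = Yᴴ := by rw [K_conjTranspose H hH Γ, hX]
  have hKYT : K H Γ Yᴴ = 0 := by rw [K_conjTranspose H hH Γ, hKY, conjTranspose_zero]
  have hermA1 : A1.IsHermitian := by
    rw [Matrix.IsHermitian, hA1, conjTranspose_smul, conjTranspose_add,
      conjTranspose_conjTranspose]
    congr 1
    · simp [Complex.star_def]
    · rw [add_comm]
  have hermY1 : Y1.IsHermitian := by
    rw [Matrix.IsHermitian, hY1, conjTranspose_smul, conjTranspose_add,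
      conjTranspose_conjTranspose]
    congr 1
    · simp [Complex.star_def]
    · rw [add_comm]
  have hKA1 : K H Γ A1 = Y1 := by
    rw [hA1, hY1, _root_.map_smul, map_add, hX, hKXT]
  have hKY1 : K H Γ Y1 = 0 := by
    rw [hY1, _root_.map_smul, map_add, hKY, hKYT, add_zero, smul_zero]
  have hY1z : Y1 = 0 := herm_case H Γ A1 Y1 hermA1 hermY1 hKA1 hKY1
  set A2 : Matrix (Fin n) (Fin n) ℂ := (-Complex.I * 2⁻¹) • (X - Xᴴ) with hA2
  set Y2 : Matrix (Fin n) (Fin n) ℂ := (-Complex.I * 2⁻¹) • (Y - Yᴴ) with hY2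
  have hermA2 : A2.IsHermitian := by
    rw [Matrix.IsHermitian, hA2, conjTranspose_smul, conjTranspose_sub,
      conjTranspose_conjTranspose]
    rw [show Xᴴ - X = (-1 : ℂ) • (X - Xᴴ) by simp, smul_smul]
    congr 1
    simp [Complex.star_def]
  have hermY2 : Y2.IsHermitian := by
    rw [Matrix.IsHermitian, hY2, conjTranspose_smul, conjTranspose_sub,
      conjTranspose_conjTranspose]
    rw [show Yᴴ - Y = (-1 : ℂ) • (Y - Yᴴ) by simp, smul_smul]
    congr 1
    simp [Complex.star_def]
  have hKA2 : K H Γ A2 = Y2 := by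
    rw [hA2, hY2, _root_.map_smul, map_sub, hX, hKXT]
  have hKY2 : K H Γ Y2 = 0 := by
    rw [hY2, _root_.map_smul, map_sub, hKY, hKYT, sub_zero, smul_zero]
  have hY2z : Y2 = 0 := herm_case H Γ A2 Y2 hermA2 hermY2 hKA2 hKY2
  have hYmYT : Y - Yᴴ = 0 := by
    rw [hY2] at hY2z
    rcases smul_eq_zero.mp hY2z with h | h
    · exfalso
      apply Complex.I_ne_zero
      have : (-Complex.I) * 2⁻¹ * 2 = 0 := by rw [h]; ring
      simpa using (by linear_combination (-1 : ℂ) * this : Complex.I = 0)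
    · exact h
  have hYpYT : Y + Yᴴ = 0 := by
    rw [hY1] at hY1z
    rcases smul_eq_zero.mp hY1z with h | h
    · norm_num at h
    · exact h
  have h2Y : Y + Y = 0 := by
    have : (Y + Yᴴ) + (Y - Yᴴ) = 0 + 0 := by rw [hYpYT, hYmYT]
    rw [show (Y + Yᴴ) + (Y - Yᴴ) = Y + Y by abel] at this
    simpa using this
  have := congrArg (fun M => (2⁻¹ : ℂ) • M) h2Y
  simpa [smul_add, ← two_smul ℂ Y, smul_smul] using this


lemma self_eq_zero_of_trace (σ : Matrix (Fin n) (Fin n) ℂ) (h : (σᴴ * σ).trace = 0) :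
    σ = 0 := by
  have hre : ((σᴴ * σ).trace).re = 0 := by rw [h]; rfl
  have hsum : ∑ j, ∑ i, Complex.normSq (σ i j) = 0 := by
    rw [← hre]
    simp only [Matrix.trace, Matrix.diag, Matrix.mul_apply, Matrix.conjTranspose_apply,
      Complex.re_sum]
    refine Finset.sum_congr rfl fun j _ => ?_
    refine (Finset.sum_congr rfl fun i _ => ?_).symm
    have : (star (σ i j)) * σ i j = (Complex.normSq (σ i j) : ℂ) := by
      rw [Complex.normSq_eq_conj_mul_self]; rfl
    rw [this, Complex.ofReal_re]
  ext i j
  have h1 := (Finset.sum_eq_zero_iff_of_nonneg (fun j _ =>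
    Finset.sum_nonneg fun i _ => Complex.normSq_nonneg (σ i j))).mp hsum j (Finset.mem_univ j)
  have h2 := (Finset.sum_eq_zero_iff_of_nonneg (fun i _ =>
    Complex.normSq_nonneg (σ i j))).mp h1 i (Finset.mem_univ i)
  simpa using Complex.normSq_eq_zero.mp h2

end LiouvAux

open LiouvAux in
/-- The eigenvalue `0` of a Liouvillian has no Jordan block:
`ker (L ∘ L) = ker L`, and more generally `ker (L ^ k) = ker L` for `k ≥ 1`. -/
theorem liouvillian_zero_eigenvalue_no_jordan_block (n : ℕ)
    (H : Matrix (Fin n) (Fin n) ℂ) (hH : H.IsHermitian)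
    (F : Type) [Fintype F] (Γ : F → Matrix (Fin n) (Fin n) ℂ)
    (L : Module.End ℂ (Matrix (Fin n) (Fin n) ℂ))
    (hL : ∀ ρ : Matrix (Fin n) (Fin n) ℂ,
      L ρ = (-Complex.I) • (H * ρ - ρ * H) +
        ∑ μ : F, (Γ μ * ρ * (Γ μ)ᴴ -
          (2⁻¹ : ℂ) • ((Γ μ)ᴴ * Γ μ * ρ + ρ * ((Γ μ)ᴴ * Γ μ)))) :
    LinearMap.ker (L ∘ₗ L) = LinearMap.ker L ∧
      ∀ k : ℕ, 1 ≤ k → LinearMap.ker (L ^ k) = LinearMap.ker L := by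
  set KK : Module.End ℂ (Matrix (Fin n) (Fin n) ℂ) := K H Γ with hKK
  have hpair : ∀ X ρ : Matrix (Fin n) (Fin n) ℂ,
      (X * L ρ).trace = (KK X * ρ).trace := by
    intro X ρ
    rw [hL ρ, hKK, K_apply]
    exact trace_adjoint H Γ X ρ
  -- ker KK ⊓ range KK = ⊥
  have hinf : LinearMap.ker KK ⊓ LinearMap.range KK = ⊥ := by
    rw [eq_bot_iff]
    rintro Y ⟨hY1, X, hX⟩
    have := ker_range_K H hH Γ Y hY1 X hX
    simpa [this] using Submodule.zero_mem ⊥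
  -- ker KK ⊔ range KK = ⊤
  have hsup : LinearMap.ker KK ⊔ LinearMap.range KK = ⊤ := by
    apply Submodule.eq_top_of_finrank_eq
    have h1 := Submodule.finrank_sup_add_finrank_inf_eq (LinearMap.ker KK)
      (LinearMap.range KK)
    have h2 := LinearMap.finrank_range_add_finrank_ker KK
    rw [hinf, finrank_bot, add_zero] at h1
    omega
  -- main kernel inclusion
  have hmain : LinearMap.ker (L ∘ₗ L) ≤ LinearMap.ker L := by
    intro ρ hρ
    have hρ2 : L (L ρ) = 0 := hρ
    set σ : Matrix (Fin n) (Fin n) ℂ := L ρ with hσdef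
    have hσtr : ∀ X : Matrix (Fin n) (Fin n) ℂ, (X * σ).trace = 0 := by
      intro X
      have hX : X ∈ LinearMap.ker KK ⊔ LinearMap.range KK := by
        rw [hsup]; trivial
      obtain ⟨X₀, hX₀, Z, hZ, rfl⟩ := Submodule.mem_sup.mp hX
      obtain ⟨X₁, rfl⟩ := hZ
      rw [Matrix.add_mul, trace_add]
      have t1 : (X₀ * σ).trace = 0 := by
        rw [hσdef, hpair X₀ ρ, LinearMap.mem_ker.mp hX₀, Matrix.zero_mul, trace_zero]
      have t2 : (KK X₁ * σ).trace = 0 := by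
        rw [← hpair X₁ σ, hρ2, Matrix.mul_zero, trace_zero]
      rw [t1, t2, add_zero]
    show σ = 0
    exact self_eq_zero_of_trace σ (hσtr σᴴ)
  have hker2 : LinearMap.ker (L ∘ₗ L) = LinearMap.ker L := by
    refine le_antisymm hmain fun ρ hρ => ?_
    have : L ρ = 0 := hρ
    show L (L ρ) = 0
    rw [this, map_zero]
  refine ⟨hker2, ?_⟩
  intro k hk
  induction k with
  | zero => omega
  | succ m ih =>
    rcases Nat.eq_or_lt_of_le hk with h1 | h1
    · rw [← h1, pow_one]
    · have hm : 1 ≤ m := by omega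
      have ihm := ih hm
      refine le_antisymm (fun x hx => ?_) (fun x hx => ?_)
      · have hx' : (L ^ m) (L x) = 0 := by
          have : (L ^ (m + 1)) x = (L ^ m) (L x) := by
            rw [pow_succ, Module.End.mul_apply]
          rw [← this]; exact hx
        have : L x ∈ LinearMap.ker (L ^ m) := hx'
        rw [ihm] at this
        have hLL : (L ∘ₗ L) x = 0 := this
        have : x ∈ LinearMap.ker (L ∘ₗ L) := hLL
        rw [hker2] at this
        exact this
      · have hx' : L x = 0 := hx
        show (L ^ (m + 1)) x = 0
        rw [pow_succ, Module.End.mul_apply, hx', map_zero]
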